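/- Fix an integer n ≥ 1 and λ ∈ [0, π], and for k ∈ ℤ define the weight w_{n,λ}(k) := (2π/n) ∑_{s=1}^{n−1} 1{2πs/n ≤ λ} · e^{-2πiks/n} ∈ ℂ. Then: (i) |w_{n,λ}(0)| ≤ π; (ii) for every k ∈ ℤ with 1 ≤ |k| ≤ n/2, |w_{n,λ}(k)| ≤ 2π/|k|; and (iii) for every k ∈ ℤ with n/2 < |k| ≤ n − 1, |w_{n,λ}(k)| ≤ 2π/(n − |k|). -/

import Mathlib

open Real

/-- The lag-window weight `w_{n,λ}(k) = (2π/n) ∑_{s=1}^{n-1} 1{2πs/n ≤ λ} e^{-2πiks/n}`. -/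
noncomputable def lagWeight (n : ℕ) (lam : ℝ) (k : ℤ) : ℂ :=
  (2 * π / n) * ∑ s ∈ Finset.Icc 1 (n - 1),
    (if 2 * π * s / n ≤ lam then
      Complex.exp (-2 * π * Complex.I * ((k : ℤ) : ℂ) * (s : ℂ) / (n : ℂ)) else 0)

lemma norm_exp_theta_sub_one (θ : ℝ) :
    ‖Complex.exp ((θ : ℂ) * Complex.I) - 1‖ = 2 * |Real.sin (θ / 2)| := by
  rw [Complex.exp_mul_I]
  have h : Complex.cos θ + Complex.sin θ * Complex.I - 1
      = ((Real.cos θ - 1 : ℝ) : ℂ) + ((Real.sin θ : ℝ) : ℂ) * Complex.I := by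
    push_cast; ring
  rw [h, Complex.norm_add_mul_I]
  have h2 : (Real.cos θ - 1)^2 + (Real.sin θ)^2 = (2 * |Real.sin (θ/2)|)^2 := by
    have h1 : Real.sin (θ/2) ^ 2 = 1/2 - Real.cos (2 * (θ/2)) / 2 := Real.sin_sq_eq_half_sub _
    rw [show 2 * (θ/2) = θ by ring] at h1
    nlinarith [Real.sin_sq_add_cos_sq θ, sq_abs (Real.sin (θ/2)), h1]
  rw [h2, Real.sqrt_sq (by positivity)]

lemma geom_bound (z : ℂ) (hz1 : ‖z‖ = 1) (hz : z ≠ 1) (M : ℕ) :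
    ‖∑ s ∈ Finset.Icc 1 M, z ^ s‖ ≤ 2 / ‖z - 1‖ := by
  have h0 : ∑ s ∈ Finset.Icc 1 M, z ^ s = z * ∑ i ∈ Finset.range M, z ^ i := by
    rw [← Finset.Ico_add_one_right_eq_Icc, Finset.sum_Ico_eq_sum_range, Finset.mul_sum]
    simp [pow_add, pow_one]
  have hne : (0:ℝ) < ‖z - 1‖ := by
    rw [norm_pos_iff]; exact sub_ne_zero.mpr hz
  have h2 : ‖∑ i ∈ Finset.range M, z ^ i‖ * ‖z - 1‖ = ‖z ^ M - 1‖ := by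
    rw [← norm_mul, geom_sum_mul]
  have h3 : ‖z ^ M - 1‖ ≤ 2 := by
    calc ‖z ^ M - 1‖ ≤ ‖z ^ M‖ + ‖(1:ℂ)‖ := norm_sub_le _ _
    _ = 2 := by rw [norm_pow, hz1]; norm_num
  rw [h0, norm_mul, hz1, one_mul, le_div_iff₀ hne, h2]
  exact h3

lemma lagWeight_eq (n : ℕ) (hn : 1 ≤ n) (lam : ℝ) (hlam0 : 0 ≤ lam) (k : ℤ) :
    lagWeight n lam k = (2 * π / n) *
      ∑ s ∈ Finset.Icc 1 (min (n - 1) ⌊lam * n / (2 * π)⌋₊),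
        Complex.exp (((-2 * π * k / n : ℝ) : ℂ) * Complex.I) ^ s := by
  have hn0 : (0:ℝ) < n := by exact_mod_cast hn
  have hnC : (n:ℂ) ≠ 0 := by exact_mod_cast hn0.ne'
  unfold lagWeight
  congr 1
  rw [← Finset.sum_filter]
  have hset : (Finset.Icc 1 (n-1)).filter (fun s : ℕ => 2 * π * s / n ≤ lam)
      = Finset.Icc 1 (min (n - 1) ⌊lam * n / (2 * π)⌋₊) := by
    ext s
    simp only [Finset.mem_filter, Finset.mem_Icc, le_min_iff]
    constructor
    · rintro ⟨⟨h1, h2⟩, h3⟩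
      refine ⟨h1, h2, ?_⟩
      rw [Nat.le_floor_iff (by positivity)]
      rw [div_le_iff₀ hn0] at h3
      rw [le_div_iff₀ (by positivity)]
      nlinarith
    · rintro ⟨h1, h2, h3⟩
      refine ⟨⟨h1, h2⟩, ?_⟩
      rw [Nat.le_floor_iff (by positivity)] at h3
      rw [le_div_iff₀ (by positivity)] at h3
      rw [div_le_iff₀ hn0]
      nlinarith
  rw [hset]
  refine Finset.sum_congr rfl fun s _ => ?_
  rw [← Complex.exp_nat_mul]
  congr 1
  push_cast
  field_simp

lemma exp_ne_one_aux (n : ℕ) (k : ℤ) (hk1 : 1 ≤ |k|) (hk2 : |k| ≤ (n:ℤ) - 1) :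
    Complex.exp (((-2 * π * k / n : ℝ) : ℂ) * Complex.I) ≠ 1 := by
  have hn1 : (1:ℤ) ≤ (n:ℤ) - 1 := le_trans hk1 hk2
  have hn0 : (0:ℝ) < n := by
    have : 0 < n := by omega
    exact_mod_cast this
  intro h
  rw [Complex.exp_eq_one_iff] at h
  obtain ⟨m, hm⟩ := h
  have hI : ((-2 * π * k / n : ℝ) : ℂ) = ((m * (2 * π) : ℝ) : ℂ) := by
    apply mul_right_cancel₀ Complex.I_ne_zero
    rw [hm]; push_cast; ring
  have h' : -2 * π * (k:ℝ) / n = m * (2 * π) := by exact_mod_cast hI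
  have h2 : -(k:ℝ) = (m:ℝ) * n := by
    have hπ : π ≠ 0 := Real.pi_ne_zero
    field_simp at h'
    nlinarith [Real.pi_pos, h']
  have h3 : -k = m * n := by exact_mod_cast h2
  rcases eq_or_ne m 0 with rfl | hm0
  · simp only [zero_mul, neg_eq_zero] at h3
    subst h3; simp at hk1
  · have : 1 ≤ |m| := Int.one_le_abs hm0
    have : |k| = |m| * n := by rw [← abs_neg, h3, abs_mul]; simp
    nlinarith [this, hk2, hn1]

lemma main_bound (n : ℕ) (hn : 1 ≤ n) (lam : ℝ) (hl0 : 0 ≤ lam) (k : ℤ)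
    (hk1 : 1 ≤ |k|) (hk2 : |k| ≤ (n:ℤ) - 1) :
    ‖lagWeight n lam k‖ ≤ 2 * π / ((n:ℝ) * |Real.sin (π * k / n)|) := by
  have hn0 : (0:ℝ) < n := by exact_mod_cast hn
  set θ : ℝ := -2 * π * k / n with hθ
  set z := Complex.exp ((θ:ℂ) * Complex.I) with hz
  have hz1 : ‖z‖ = 1 := Complex.norm_exp_ofReal_mul_I θ
  have hzne : z ≠ 1 := exp_ne_one_aux n k hk1 hk2
  have hnorm : ‖z - 1‖ = 2 * |Real.sin (π * k / n)| := by
    rw [hz, norm_exp_theta_sub_one θ]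
    rw [show θ/2 = -(π * k / n) by rw [hθ]; ring, Real.sin_neg, abs_neg]
  have hzpos : (0:ℝ) < ‖z - 1‖ := by
    rw [norm_pos_iff]; exact sub_ne_zero.mpr hzne
  have hsin0 : 0 < |Real.sin (π * k / n)| := by linarith [hnorm ▸ hzpos]
  rw [lagWeight_eq n hn lam hl0 k, norm_mul]
  have h1 : ‖((2*(π:ℂ)/(n:ℂ)) : ℂ)‖ = 2*π/n := by
    rw [show ((2*(π:ℂ)/(n:ℂ)):ℂ) = ((2*π/n : ℝ):ℂ) by push_cast; ring,
      Complex.norm_real, Real.norm_eq_abs, abs_of_pos (by positivity)]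
  calc ‖(2*(π:ℂ)/(n:ℂ) : ℂ)‖ * ‖∑ s ∈ Finset.Icc 1 (min (n - 1) ⌊lam * n / (2 * π)⌋₊), z ^ s‖
      ≤ (2*π/n) * (2 / ‖z - 1‖) := by
        rw [h1]
        exact mul_le_mul_of_nonneg_left (geom_bound z hz1 hzne _) (by positivity)
    _ = 2 * π / ((n:ℝ) * |Real.sin (π * k / n)|) := by
        rw [hnorm]; field_simp

theorem stmt4 (n : ℕ) (hn : 1 ≤ n) (lam : ℝ) (hlam : lam ∈ Set.Icc (0 : ℝ) π) :
    ‖lagWeight n lam 0‖ ≤ π ∧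
    (∀ k : ℤ, 1 ≤ |k| → ((|k| : ℤ) : ℝ) ≤ (n : ℝ) / 2 →
      ‖lagWeight n lam k‖ ≤ 2 * π / ((|k| : ℤ) : ℝ)) ∧
    (∀ k : ℤ, (n : ℝ) / 2 < ((|k| : ℤ) : ℝ) → |k| ≤ (n : ℤ) - 1 →
      ‖lagWeight n lam k‖ ≤ 2 * π / ((n : ℝ) - ((|k| : ℤ) : ℝ))) := by
  obtain ⟨hl0, hlπ⟩ := hlam
  have hn0 : (0:ℝ) < n := by exact_mod_cast hn
  have hπ0 : (0:ℝ) < π := Real.pi_pos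
  -- the sine identity: |sin (π k / n)| = sin (π |k| / n)
  have habs_sin : ∀ k : ℤ, 1 ≤ |k| → |k| ≤ (n:ℤ) - 1 →
      |Real.sin (π * k / n)| = Real.sin (π * ((|k|:ℤ):ℝ) / n) := by
    intro k hk1 hk2
    have hkn : ((|k|:ℤ):ℝ) ≤ (n:ℝ) := by
      have : |k| ≤ (n:ℤ) := by omega
      exact_mod_cast this
    have hk0 : (0:ℝ) ≤ ((|k|:ℤ):ℝ) := by positivity
    have hnn : 0 ≤ Real.sin (π * ((|k|:ℤ):ℝ) / n) := by
      apply Real.sin_nonneg_of_nonneg_of_le_pi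
      · positivity
      · rw [div_le_iff₀ hn0]
        nlinarith
    rcases abs_choice k with h | h
    · rw [h] at hnn ⊢
      exact abs_of_nonneg hnn
    · rw [h] at hnn ⊢
      push_cast at hnn ⊢
      rw [show π * -(k:ℝ) / n = -(π * k / n) by ring, Real.sin_neg] at hnn ⊢
      exact abs_of_nonpos (by linarith)
  refine ⟨?_, ?_, ?_⟩
  · -- k = 0
    rw [lagWeight_eq n hn lam hl0 0]
    have : ((-2 * π * ((0:ℤ):ℝ) / n : ℝ) : ℂ) = 0 := by push_cast; ring
    rw [this]
    simp only [zero_mul, Complex.exp_zero, one_pow, Finset.sum_const, nsmul_eq_mul, mul_one]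
    set M := min (n - 1) ⌊lam * n / (2 * π)⌋₊ with hM
    have hMle : (M:ℝ) ≤ (n:ℝ)/2 := by
      have h1 : ((M:ℕ):ℝ) ≤ (⌊lam * n / (2*π)⌋₊ : ℝ) := by
        exact_mod_cast min_le_right (n-1) _
      have h2 : (⌊lam * n / (2*π)⌋₊ : ℝ) ≤ lam * n / (2*π) := Nat.floor_le (by positivity)
      have h3 : lam * n / (2*π) ≤ (n:ℝ)/2 := by
        rw [div_le_div_iff₀ (by positivity) (by positivity)]
        nlinarith
      linarith
    have : ‖(2*(π:ℂ)/(n:ℂ)) * ((Finset.Icc 1 M).card : ℂ)‖ = 2*π/n * ((Finset.Icc 1 M).card : ℝ) := by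
      rw [norm_mul, show ((2*(π:ℂ)/(n:ℂ)):ℂ) = ((2*π/n : ℝ):ℂ) by push_cast; ring,
        Complex.norm_real, Real.norm_eq_abs, abs_of_pos (by positivity), Complex.norm_natCast]
    rw [this]
    have hcard : ((Finset.Icc 1 M).card : ℝ) ≤ (n:ℝ)/2 := by
      rw [Nat.card_Icc]
      have : (M + 1 - 1 : ℕ) = M := by omega
      rw [this]
      exact hMle
    calc 2*π/n * ((Finset.Icc 1 M).card : ℝ) ≤ 2*π/n * ((n:ℝ)/2) :=
          mul_le_mul_of_nonneg_left hcard (by positivity)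
      _ = π := by field_simp
  · -- 1 ≤ |k| ≤ n/2
    intro k hk1 hk2
    have hj0 : (0:ℝ) < ((|k|:ℤ):ℝ) := by exact_mod_cast hk1
    have hk2' : |k| ≤ (n:ℤ) - 1 := by
      have h2n : (2:ℝ) * ((|k|:ℤ):ℝ) ≤ n := by linarith
      have : (2 * |k| : ℤ) ≤ (n:ℤ) := by exact_mod_cast h2n
      omega
    have hsin : (2:ℝ) * ((|k|:ℤ):ℝ) / n ≤ Real.sin (π * ((|k|:ℤ):ℝ) / n) := by
      have := Real.mul_le_sin (x := π * ((|k|:ℤ):ℝ) / n) (by positivity)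
        (by rw [div_le_iff₀ hn0]; nlinarith)
      calc (2:ℝ) * ((|k|:ℤ):ℝ) / n = 2 / π * (π * ((|k|:ℤ):ℝ) / n) := by
            field_simp
        _ ≤ _ := this
    calc ‖lagWeight n lam k‖ ≤ 2 * π / ((n:ℝ) * |Real.sin (π * k / n)|) :=
          main_bound n hn lam hl0 k hk1 hk2'
      _ ≤ 2 * π / ((|k|:ℤ):ℝ) := by
          rw [habs_sin k hk1 hk2']
          apply div_le_div_of_nonneg_left (by positivity) hj0
          have ha : (n:ℝ) * (2 * ((|k|:ℤ):ℝ) / n) ≤ n * Real.sin (π * ((|k|:ℤ):ℝ) / n) :=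
            mul_le_mul_of_nonneg_left hsin (le_of_lt hn0)
          have hb : (n:ℝ) * (2 * ((|k|:ℤ):ℝ) / n) = 2 * ((|k|:ℤ):ℝ) := by field_simp
          linarith
  · -- n/2 < |k| ≤ n-1
    intro k hk2 hk3
    have hk1 : 1 ≤ |k| := by
      rcases Int.lt_or_le |k| 1 with h | h
      · exfalso
        have h0 : |k| = 0 := by have := abs_nonneg k; omega
        rw [h0] at hk2
        norm_num at hk2
        linarith
      · exact h
    have hj : ((|k|:ℤ):ℝ) ≤ (n:ℝ) - 1 := by exact_mod_cast hk3
    set c : ℝ := (n:ℝ) - ((|k|:ℤ):ℝ) with hc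
    have hc0 : (0:ℝ) < c := by rw [hc]; linarith
    have hc2 : c ≤ (n:ℝ)/2 := by rw [hc]; linarith
    have hsin_eq : Real.sin (π * ((|k|:ℤ):ℝ) / n) = Real.sin (π * c / n) := by
      rw [← Real.sin_pi_sub]
      congr 1
      rw [hc]
      field_simp
    have hsin : (2:ℝ) * c / n ≤ Real.sin (π * c / n) := by
      have := Real.mul_le_sin (x := π * c / n) (by positivity)
        (by rw [div_le_iff₀ hn0]; nlinarith)
      calc (2:ℝ) * c / n = 2 / π * (π * c / n) := by field_simp
        _ ≤ _ := this
    calc ‖lagWeight n lam k‖ ≤ 2 * π / ((n:ℝ) * |Real.sin (π * k / n)|) :=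
          main_bound n hn lam hl0 k hk1 hk3
      _ ≤ 2 * π / c := by
          rw [habs_sin k hk1 hk3, hsin_eq]
          apply div_le_div_of_nonneg_left (by positivity) hc0
          have ha : (n:ℝ) * (2 * c / n) ≤ n * Real.sin (π * c / n) :=
            mul_le_mul_of_nonneg_left hsin (le_of_lt hn0)
          have hb : (n:ℝ) * (2 * c / n) = 2 * c := by field_simp
          linarith
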